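/- For n ≥ 1 and the rank one operator A(f) = ⟨f, zⁿ⟩zⁿ on the Bergman space A²(𝔻), the Berezin transform is Ã(λ) = (1-|λ|²)²|λ|^{2n}, and the Berezin range is [0, 4nⁿ/(n+2)^{n+2}]. Equivalently, the supremum of r^{2n}(1-r²)² over r ∈ [0,1) equals 4nⁿ/(n+2)^{n+2}, attained at r² = n/(n+2), and the range of this function is the full interval [0, 4nⁿ/(n+2)^{n+2}]. -/

import Mathlib

lemma berezin_key_ineq (n : ℕ) (hn : 1 ≤ n) {t : ℝ} (ht0 : 0 ≤ t) (ht1 : t ≤ 1) :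
    t ^ n * (1 - t) ^ 2 ≤ 4 * (n : ℝ) ^ n / ((n : ℝ) + 2) ^ (n + 2) := by
  have hN : (0:ℝ) < n := by exact_mod_cast hn
  have hN2 : (0:ℝ) < (n:ℝ) + 2 := by linarith
  set p1 : ℝ := t * (((n:ℝ) + 2) / n) with hp1def
  set p2 : ℝ := (1 - t) * (((n:ℝ) + 2) / 2) with hp2def
  have hp1 : 0 ≤ p1 := by positivity
  have hp2 : 0 ≤ p2 := by
    have : 0 ≤ 1 - t := by linarith
    positivity
  have hw1 : (0:ℝ) ≤ (n:ℝ) / ((n:ℝ)+2) := by positivity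
  have hw2 : (0:ℝ) ≤ 2 / ((n:ℝ)+2) := by positivity
  have hw : (n:ℝ) / ((n:ℝ)+2) + 2 / ((n:ℝ)+2) = 1 := by field_simp
  have hgm := Real.geom_mean_le_arith_mean2_weighted hw1 hw2 hp1 hp2 hw
  have ham : (n:ℝ) / ((n:ℝ)+2) * p1 + 2 / ((n:ℝ)+2) * p2 = 1 := by
    rw [hp1def, hp2def]; field_simp; ring
  rw [ham] at hgm
  have hpow : (p1 ^ ((n:ℝ) / ((n:ℝ)+2)) * p2 ^ ((2:ℝ) / ((n:ℝ)+2))) ^ (n + 2) ≤ 1 :=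
    pow_le_one₀ (by positivity) hgm
  have e1 : (p1 ^ ((n:ℝ) / ((n:ℝ)+2))) ^ (n + 2) = p1 ^ n := by
    rw [← Real.rpow_natCast (p1 ^ ((n:ℝ) / ((n:ℝ)+2))) (n+2), ← Real.rpow_mul hp1]
    rw [show ((n:ℝ) / ((n:ℝ)+2)) * ((n+2 : ℕ) : ℝ) = (n:ℝ) by push_cast; field_simp]
    exact Real.rpow_natCast p1 n
  have e2 : (p2 ^ ((2:ℝ) / ((n:ℝ)+2))) ^ (n + 2) = p2 ^ 2 := by
    rw [← Real.rpow_natCast (p2 ^ ((2:ℝ) / ((n:ℝ)+2))) (n+2), ← Real.rpow_mul hp2]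
    rw [show ((2:ℝ) / ((n:ℝ)+2)) * ((n+2 : ℕ) : ℝ) = (2:ℝ) by push_cast; field_simp]
    norm_num
  rw [mul_pow, e1, e2] at hpow
  have heq : t ^ n * (1 - t) ^ 2
      = p1 ^ n * p2 ^ 2 * (4 * (n : ℝ) ^ n / ((n : ℝ) + 2) ^ (n + 2)) := by
    rw [hp1def, hp2def, mul_pow, mul_pow, div_pow, div_pow, pow_add]
    field_simp
    ring
  rw [heq]
  calc p1 ^ n * p2 ^ 2 * (4 * (n : ℝ) ^ n / ((n : ℝ) + 2) ^ (n + 2))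
      ≤ 1 * (4 * (n : ℝ) ^ n / ((n : ℝ) + 2) ^ (n + 2)) :=
        mul_le_mul_of_nonneg_right hpow (by positivity)
    _ = _ := one_mul _

lemma berezin_key_eq (n : ℕ) (hn : 1 ≤ n) :
    (Real.sqrt ((n : ℝ) / (n + 2))) ^ (2*n) * (1 - (Real.sqrt ((n : ℝ) / (n + 2))) ^ 2) ^ 2
      = 4 * (n : ℝ) ^ n / ((n : ℝ) + 2) ^ (n + 2) := by
  have hN : (0:ℝ) ≤ n := Nat.cast_nonneg n
  have hN2 : (0:ℝ) < (n:ℝ) + 2 := by linarith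
  have ht : (0:ℝ) ≤ (n:ℝ) / ((n:ℝ)+2) := by positivity
  have hsq : (Real.sqrt ((n : ℝ) / (n + 2))) ^ 2 = (n:ℝ) / ((n:ℝ)+2) := Real.sq_sqrt ht
  rw [pow_mul, hsq]
  rw [pow_add, div_pow]
  rw [show (1 : ℝ) - (n:ℝ)/((n:ℝ)+2) = 2/((n:ℝ)+2) by field_simp; ring]
  rw [div_pow]
  field_simp
  ring

lemma berezin_image (n : ℕ) (hn : 1 ≤ n) :
    (fun r : ℝ => r ^ (2*n) * (1 - r ^ 2) ^ 2) '' Set.Ico (0:ℝ) 1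
      = Set.Icc 0 (4 * (n : ℝ) ^ n / ((n : ℝ) + 2) ^ (n + 2)) := by
  have hN : (0:ℝ) < n := by exact_mod_cast hn
  have hN2 : (0:ℝ) < (n:ℝ) + 2 := by linarith
  set f : ℝ → ℝ := fun r : ℝ => r ^ (2*n) * (1 - r ^ 2) ^ 2 with hf
  set M : ℝ := 4 * (n : ℝ) ^ n / ((n : ℝ) + 2) ^ (n + 2) with hM
  set rs : ℝ := Real.sqrt ((n : ℝ) / (n + 2)) with hrs
  have hrs0 : 0 ≤ rs := Real.sqrt_nonneg _
  have hrs1 : rs < 1 := by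
    have h1 : (n:ℝ) / ((n:ℝ)+2) < 1 := by
      rw [div_lt_one hN2]; linarith
    calc rs < Real.sqrt 1 := Real.sqrt_lt_sqrt (by positivity) h1
      _ = 1 := Real.sqrt_one
  apply Set.Subset.antisymm
  · rintro x ⟨r, ⟨hr0, hr1⟩, rfl⟩
    constructor
    · have h1 : r ^ 2 ≤ 1 := by nlinarith
      have : (0:ℝ) ≤ f r := by
        apply mul_nonneg (by positivity)
        positivity
      exact this
    · have h1 : r ^ 2 ≤ 1 := by nlinarith
      have := berezin_key_ineq n hn (t := r ^ 2) (by positivity) h1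
      calc f r = (r ^ 2) ^ n * (1 - r ^ 2) ^ 2 := by rw [hf]; simp only []; rw [pow_mul]
        _ ≤ M := this
  · intro x hx
    have hcont : ContinuousOn f (Set.Icc 0 rs) := (by fun_prop : Continuous f).continuousOn
    have hivt := intermediate_value_Icc hrs0 hcont
    have hf0 : f 0 = 0 := by
      simp only [hf]
      rw [zero_pow (by omega)]
      ring
    have hfrs : f rs = M := berezin_key_eq n hn
    rw [hf0, hfrs] at hivt
    obtain ⟨r, hr, hfr⟩ := hivt hx
    exact ⟨r, ⟨hr.1, lt_of_le_of_lt hr.2 hrs1⟩, hfr⟩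

theorem berezin_range_rank_one_zn_bergman (n : ℕ) (hn : 1 ≤ n) :
    (∀ r ∈ Set.Ico (0:ℝ) 1,
        r ^ (2*n) * (1 - r ^ 2) ^ 2 ≤ 4 * (n : ℝ) ^ n / ((n : ℝ) + 2) ^ (n + 2)) ∧
    (Real.sqrt ((n : ℝ) / (n + 2))) ^ (2*n) * (1 - (Real.sqrt ((n : ℝ) / (n + 2))) ^ 2) ^ 2
        = 4 * (n : ℝ) ^ n / ((n : ℝ) + 2) ^ (n + 2) ∧
    (fun r : ℝ => r ^ (2*n) * (1 - r ^ 2) ^ 2) '' Set.Ico (0:ℝ) 1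
        = Set.Icc 0 (4 * (n : ℝ) ^ n / ((n : ℝ) + 2) ^ (n + 2)) ∧
    {z : ℂ | ∃ l : ℂ, ‖l‖ < 1 ∧ z = (((1 - ‖l‖ ^ 2) ^ 2 * ‖l‖ ^ (2*n) : ℝ) : ℂ)}
        = (fun x : ℝ => (x : ℂ)) '' Set.Icc 0 (4 * (n : ℝ) ^ n / ((n : ℝ) + 2) ^ (n + 2)) := by
  have himg := berezin_image n hn
  refine ⟨?_, berezin_key_eq n hn, himg, ?_⟩
  · intro r hr
    have hmem : r ^ (2*n) * (1 - r ^ 2) ^ 2 ∈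
        (fun r : ℝ => r ^ (2*n) * (1 - r ^ 2) ^ 2) '' Set.Ico (0:ℝ) 1 := ⟨r, hr, rfl⟩
    rw [himg] at hmem
    exact hmem.2
  · ext z
    constructor
    · rintro ⟨l, hl, rfl⟩
      have hmem : ‖l‖ ^ (2*n) * (1 - ‖l‖ ^ 2) ^ 2 ∈
          (fun r : ℝ => r ^ (2*n) * (1 - r ^ 2) ^ 2) '' Set.Ico (0:ℝ) 1 :=
        ⟨‖l‖, ⟨norm_nonneg l, hl⟩, rfl⟩
      rw [himg] at hmem
      exact ⟨‖l‖ ^ (2*n) * (1 - ‖l‖ ^ 2) ^ 2, hmem, by push_cast; ring⟩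
    · rintro ⟨x, hx, rfl⟩
      rw [← himg] at hx
      obtain ⟨r, ⟨hr0, hr1⟩, hfr⟩ := hx
      refine ⟨(r : ℂ), ?_, ?_⟩
      · rw [Complex.norm_real, Real.norm_eq_abs, abs_of_nonneg hr0]; exact hr1
      · rw [Complex.norm_real, Real.norm_eq_abs, abs_of_nonneg hr0]
        rw [← hfr]
        push_cast
        ring
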